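/- Let p ≥ 0 be an integer, n > 0 real and κ ∈ ℂ with F_p(κ, n) = 0. Then the partial derivative of F_p with respect to the real parameter n satisfies ∂_n F_p(κ, n) = ((n·κ² − p²)/(2n))·J_p(κ)·J_p(√n·κ) + (κ²/(2√n))·J_p'(κ)·J_p'(√n·κ). -/

import Mathlib

open Complex Real Filter Set

/-- Bessel function of the first kind of integer order `p`. -/
noncomputable def besselJ (p : ℕ) (z : ℂ) : ℂ :=
  ∑' m : ℕ, ((-1 : ℂ) ^ m / ((Nat.factorial m : ℂ) * (Nat.factorial (m + p) : ℂ)))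
    * (z / 2) ^ (2 * m + p)

/-- Derivative of the Bessel function. -/
noncomputable def besselJ' (p : ℕ) (z : ℂ) : ℂ := deriv (besselJ p) z

/-- The ITE determinant function `F_p(κ, n)`. -/
noncomputable def Fp (p : ℕ) (κ : ℂ) (n : ℝ) : ℂ :=
  κ * (besselJ' p κ * besselJ p ((Real.sqrt n : ℂ) * κ)
    - (Real.sqrt n : ℂ) * besselJ p κ * besselJ' p ((Real.sqrt n : ℂ) * κ))

/- ### Auxiliary development -/

noncomputable def bc (p m : ℕ) : ℂ :=
  (-1 : ℂ) ^ m / ((Nat.factorial m : ℂ) * (Nat.factorial (m + p) : ℂ))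

noncomputable def bg0 (p m : ℕ) (z : ℂ) : ℂ := bc p m * (z / 2) ^ (2 * m + p)

noncomputable def bg1 (p m : ℕ) (z : ℂ) : ℂ :=
  bc p m * ((2 * m + p : ℕ) : ℂ) / 2 * (z / 2) ^ (2 * m + p - 1)

noncomputable def bg2 (p m : ℕ) (z : ℂ) : ℂ :=
  bc p m * ((2 * m + p : ℕ) : ℂ) * ((2 * m + p - 1 : ℕ) : ℂ) / 4 * (z / 2) ^ (2 * m + p - 1 - 1)

lemma norm_bc (p m : ℕ) :
    ‖bc p m‖ = 1 / ((Nat.factorial m : ℝ) * (Nat.factorial (m + p) : ℝ)) := by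
  simp [bc, norm_div, norm_pow]

lemma sq_succ_le_four_pow (m : ℕ) : ((m : ℝ) + 1) ^ 2 ≤ 4 ^ m := by
  induction m with
  | zero => norm_num
  | succ k ih =>
    have h4 : (0:ℝ) ≤ 4 ^ k := by positivity
    push_cast
    calc ((k : ℝ) + 1 + 1) ^ 2 ≤ 4 * ((k : ℝ) + 1) ^ 2 := by nlinarith [k.cast_nonneg (α := ℝ)]
      _ ≤ 4 * 4 ^ k := by nlinarith [ih]
      _ = 4 ^ (k + 1) := by ring

noncomputable def bu (p : ℕ) (R : ℝ) (m : ℕ) : ℝ :=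
  (R / 2) ^ p * (((m : ℝ) + p + 1) ^ 2 * ((R / 2) ^ 2) ^ m / (Nat.factorial m : ℝ))

lemma summable_bu (p : ℕ) (R : ℝ) (hR : 0 ≤ R) : Summable (bu p R) := by
  apply Summable.mul_left
  set x : ℝ := (R / 2) ^ 2 with hx
  have hx0 : 0 ≤ x := sq_nonneg _
  have h : ∀ m : ℕ, ((m : ℝ) + p + 1) ^ 2 * x ^ m / (Nat.factorial m : ℝ)
      ≤ ((p : ℝ) + 1) ^ 2 * ((4 * x) ^ m / (Nat.factorial m : ℝ)) := by
    intro m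
    have h1 : ((m : ℝ) + p + 1) ^ 2 ≤ ((p : ℝ) + 1) ^ 2 * ((m : ℝ) + 1) ^ 2 := by
      have : (m : ℝ) + p + 1 ≤ ((p : ℝ) + 1) * ((m : ℝ) + 1) := by
        nlinarith [m.cast_nonneg (α := ℝ), p.cast_nonneg (α := ℝ)]
      nlinarith [m.cast_nonneg (α := ℝ), p.cast_nonneg (α := ℝ)]
    have h2 : ((m : ℝ) + 1) ^ 2 ≤ 4 ^ m := sq_succ_le_four_pow m
    have h3 : ((m : ℝ) + p + 1) ^ 2 ≤ ((p : ℝ) + 1) ^ 2 * 4 ^ m :=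
      le_trans h1 (by nlinarith [sq_nonneg ((p:ℝ)+1)])
    have hkey : ((m : ℝ) + p + 1) ^ 2 * x ^ m ≤ ((p : ℝ) + 1) ^ 2 * (4 ^ m * x ^ m) := by
      calc ((m : ℝ) + p + 1) ^ 2 * x ^ m ≤ ((p : ℝ) + 1) ^ 2 * 4 ^ m * x ^ m :=
            mul_le_mul_of_nonneg_right h3 (pow_nonneg hx0 m)
        _ = ((p : ℝ) + 1) ^ 2 * (4 ^ m * x ^ m) := by ring
    have hrw : ((p : ℝ) + 1) ^ 2 * ((4 * x) ^ m / (Nat.factorial m : ℝ))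
        = ((p : ℝ) + 1) ^ 2 * (4 ^ m * x ^ m) / (Nat.factorial m : ℝ) := by
      rw [mul_pow]; ring
    rw [hrw]
    gcongr
  apply Summable.of_nonneg_of_le (fun m => by positivity) h
  exact ((Real.summable_pow_div_factorial (4 * x)).mul_left _)


lemma norm_y2_pow_le {R : ℝ} (hR : 2 ≤ R) {y : ℂ} (hy : ‖y‖ ≤ R) (p m e : ℕ)
    (he : e ≤ 2 * m + p) : ‖y / 2‖ ^ e ≤ (R / 2) ^ p * ((R / 2) ^ 2) ^ m := by
  have h1 : ‖y / 2‖ ≤ R / 2 := by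
    rw [norm_div]; simp only [Complex.norm_ofNat]
    exact div_le_div_of_nonneg_right hy (by norm_num)
  have h2 : ‖y / 2‖ ^ e ≤ (R / 2) ^ e := pow_le_pow_left₀ (norm_nonneg _) h1 e
  have h3 : (R / 2) ^ e ≤ (R / 2) ^ (2 * m + p) :=
    pow_le_pow_right₀ (by linarith) he
  have h4 : (R / 2) ^ (2 * m + p) = (R / 2) ^ p * ((R / 2) ^ 2) ^ m := by
    rw [pow_add, pow_mul]; ring
  calc ‖y / 2‖ ^ e ≤ (R / 2) ^ e := h2
    _ ≤ (R / 2) ^ (2 * m + p) := h3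
    _ = _ := h4

lemma norm_bc_le (p m : ℕ) : ‖bc p m‖ ≤ 1 / (Nat.factorial m : ℝ) := by
  rw [norm_bc]
  have h1 : (0 : ℝ) < (Nat.factorial m : ℝ) := by positivity
  apply one_div_le_one_div_of_le h1
  have h2 : (1 : ℝ) ≤ (Nat.factorial (m + p) : ℝ) := by
    exact_mod_cast Nat.one_le_iff_ne_zero.2 (Nat.factorial_ne_zero _)
  nlinarith

lemma cast_le_aux (p m : ℕ) : ((2 * m + p : ℕ) : ℝ) ≤ 2 * ((m : ℝ) + p + 1) := by
  push_cast; linarith [p.cast_nonneg (α := ℝ)]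

lemma cast_le_aux' (p m : ℕ) : ((2 * m + p - 1 : ℕ) : ℝ) ≤ 2 * ((m : ℝ) + p + 1) := by
  have h := (Nat.cast_le (α := ℝ)).2 (show 2 * m + p - 1 ≤ 2 * (m + p + 1) by omega)
  push_cast at h; linarith

lemma one_le_mp1 (p m : ℕ) : (1 : ℝ) ≤ (m : ℝ) + p + 1 := by
  have := m.cast_nonneg (α := ℝ); have := p.cast_nonneg (α := ℝ); linarith

lemma bu_eq (p : ℕ) (R : ℝ) (m : ℕ) :
    bu p R m = 1 / (Nat.factorial m : ℝ) * ((m : ℝ) + p + 1) ^ 2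
      * ((R / 2) ^ p * ((R / 2) ^ 2) ^ m) := by
  unfold bu; ring

lemma norm_bg0_le (p m : ℕ) {R : ℝ} (hR : 2 ≤ R) {y : ℂ} (hy : ‖y‖ ≤ R) :
    ‖bg0 p m y‖ ≤ bu p R m := by
  rw [bu_eq]
  have h1 : ‖bg0 p m y‖ = ‖bc p m‖ * ‖y / 2‖ ^ (2 * m + p) := by
    rw [bg0, norm_mul, norm_pow]
  rw [h1]
  have hc : ‖bc p m‖ ≤ 1 / (Nat.factorial m : ℝ) * ((m : ℝ) + p + 1) ^ 2 := by
    calc ‖bc p m‖ ≤ 1 / (Nat.factorial m : ℝ) := norm_bc_le p m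
      _ ≤ _ := by
          have h4 : (0:ℝ) < 1 / (Nat.factorial m : ℝ) := by positivity
          have hq : (1:ℝ) ≤ ((m : ℝ) + p + 1) ^ 2 := by nlinarith [one_le_mp1 p m]
          nlinarith [mul_le_mul_of_nonneg_left hq h4.le]
  exact mul_le_mul hc (norm_y2_pow_le hR hy p m _ le_rfl) (by positivity) (by positivity)

lemma norm_bg1_le (p m : ℕ) {R : ℝ} (hR : 2 ≤ R) {y : ℂ} (hy : ‖y‖ ≤ R) :
    ‖bg1 p m y‖ ≤ bu p R m := by
  rw [bu_eq]
  have h1 : ‖bg1 p m y‖ = ‖bc p m‖ * ((2 * m + p : ℕ) : ℝ) / 2 * ‖y / 2‖ ^ (2 * m + p - 1) := by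
    rw [bg1, norm_mul, norm_div, norm_mul, norm_pow, Complex.norm_natCast, Complex.norm_ofNat]
  rw [h1]
  have hc : ‖bc p m‖ * ((2 * m + p : ℕ) : ℝ) / 2
      ≤ 1 / (Nat.factorial m : ℝ) * ((m : ℝ) + p + 1) ^ 2 := by
    have hb := norm_bc_le p m
    have ha := cast_le_aux p m
    have h0 : (0 : ℝ) ≤ ‖bc p m‖ := norm_nonneg _
    have h2 : ((2 * m + p : ℕ) : ℝ) ≥ 0 := Nat.cast_nonneg _
    have h3 := one_le_mp1 p m
    have h4 : (0:ℝ) < 1 / (Nat.factorial m : ℝ) := by positivity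
    nlinarith [mul_le_mul hb ha h2 h4.le,
      mul_nonneg h4.le (by nlinarith [one_le_mp1 p m] :
        (0:ℝ) ≤ ((m : ℝ) + p + 1) ^ 2 - ((m : ℝ) + p + 1))]
  exact mul_le_mul hc (norm_y2_pow_le hR hy p m _ (by omega)) (by positivity) (by positivity)

lemma norm_bg2_le (p m : ℕ) {R : ℝ} (hR : 2 ≤ R) {y : ℂ} (hy : ‖y‖ ≤ R) :
    ‖bg2 p m y‖ ≤ bu p R m := by
  rw [bu_eq]
  have h1 : ‖bg2 p m y‖ = ‖bc p m‖ * ((2 * m + p : ℕ) : ℝ) * ((2 * m + p - 1 : ℕ) : ℝ) / 4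
      * ‖y / 2‖ ^ (2 * m + p - 1 - 1) := by
    rw [bg2, norm_mul, norm_div, norm_mul, norm_mul, norm_pow, Complex.norm_natCast,
      Complex.norm_natCast, Complex.norm_ofNat]
  rw [h1]
  have hc : ‖bc p m‖ * ((2 * m + p : ℕ) : ℝ) * ((2 * m + p - 1 : ℕ) : ℝ) / 4
      ≤ 1 / (Nat.factorial m : ℝ) * ((m : ℝ) + p + 1) ^ 2 := by
    have hb := norm_bc_le p m
    have ha := cast_le_aux p m
    have ha' := cast_le_aux' p m
    have h0 : (0 : ℝ) ≤ ‖bc p m‖ := norm_nonneg _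
    have h2 : ((2 * m + p : ℕ) : ℝ) ≥ 0 := Nat.cast_nonneg _
    have h2' : ((2 * m + p - 1 : ℕ) : ℝ) ≥ 0 := Nat.cast_nonneg _
    have h4 : (0:ℝ) < 1 / (Nat.factorial m : ℝ) := by positivity
    nlinarith [mul_le_mul (mul_le_mul hb ha h2 h4.le) ha' h2'
      (mul_nonneg h4.le (by nlinarith [one_le_mp1 p m] : (0:ℝ) ≤ 2 * ((m : ℝ) + p + 1)))]
  exact mul_le_mul hc (norm_y2_pow_le hR hy p m _ (by omega)) (by positivity) (by positivity)


lemma hasDerivAt_bg0 (p m : ℕ) (z : ℂ) : HasDerivAt (bg0 p m) (bg1 p m z) z := by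
  have h1 : HasDerivAt (fun z : ℂ => z / 2) (1 / 2) z := by
    simpa using (hasDerivAt_id z).div_const 2
  have h2 := ((hasDerivAt_pow (2 * m + p) (z / 2)).comp z h1).const_mul (bc p m)
  exact h2.congr_deriv (by unfold bg1; ring)

lemma hasDerivAt_bg1 (p m : ℕ) (z : ℂ) : HasDerivAt (bg1 p m) (bg2 p m z) z := by
  have h1 : HasDerivAt (fun z : ℂ => z / 2) (1 / 2) z := by
    simpa using (hasDerivAt_id z).div_const 2
  have h2 := ((hasDerivAt_pow (2 * m + p - 1) (z / 2)).comp z h1).const_mul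
    (bc p m * ((2 * m + p : ℕ) : ℂ) / 2)
  exact h2.congr_deriv (by unfold bg2; ring)

lemma summable_bg0_zero (p : ℕ) : Summable (fun m => bg0 p m 0) := by
  apply summable_of_ne_finset_zero (s := {0})
  intro m hm
  simp only [Finset.mem_singleton] at hm
  have : 2 * m + p ≠ 0 := by omega
  simp [bg0, zero_div, zero_pow this]

lemma summable_bg1_zero (p : ℕ) : Summable (fun m => bg1 p m 0) := by
  apply summable_of_ne_finset_zero (s := {0})
  intro m hm
  simp only [Finset.mem_singleton] at hm
  have : 2 * m + p - 1 ≠ 0 := by omega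
  simp [bg1, zero_div, zero_pow this]

lemma mem_ball_aux (z : ℂ) : z ∈ Metric.ball (0 : ℂ) (‖z‖ + 2) := by
  have : dist z (0:ℂ) < ‖z‖ + 2 := by
    rw [dist_zero_right]; linarith [norm_nonneg z]
  exact Metric.mem_ball.2 this

lemma hasDerivAt_tsum_bg0 (p : ℕ) (z : ℂ) :
    HasDerivAt (fun y => ∑' m, bg0 p m y) (∑' m, bg1 p m z) z := by
  set R : ℝ := ‖z‖ + 2 with hR
  have hR2 : 2 ≤ R := by rw [hR]; linarith [norm_nonneg z]
  apply hasDerivAt_tsum_of_isPreconnected (u := bu p R)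
    (summable_bu p R (by linarith)) Metric.isOpen_ball
    (convex_ball (0 : ℂ) R).isPreconnected
    (g' := fun m y => bg1 p m y)
    (fun m y _ => hasDerivAt_bg0 p m y)
    (fun m y hy => norm_bg1_le p m hR2 (by
      simpa [Complex.dist_eq] using (Metric.mem_ball.1 hy).le))
    (y₀ := 0) (Metric.mem_ball_self (by rw [hR]; linarith [norm_nonneg z]))
    (summable_bg0_zero p) (mem_ball_aux z)

lemma hasDerivAt_tsum_bg1 (p : ℕ) (z : ℂ) :
    HasDerivAt (fun y => ∑' m, bg1 p m y) (∑' m, bg2 p m z) z := by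
  set R : ℝ := ‖z‖ + 2 with hR
  have hR2 : 2 ≤ R := by rw [hR]; linarith [norm_nonneg z]
  apply hasDerivAt_tsum_of_isPreconnected (u := bu p R)
    (summable_bu p R (by linarith)) Metric.isOpen_ball
    (convex_ball (0 : ℂ) R).isPreconnected
    (g' := fun m y => bg2 p m y)
    (fun m y _ => hasDerivAt_bg1 p m y)
    (fun m y hy => norm_bg2_le p m hR2 (by
      simpa [Complex.dist_eq] using (Metric.mem_ball.1 hy).le))
    (y₀ := 0) (Metric.mem_ball_self (by rw [hR]; linarith [norm_nonneg z]))
    (summable_bg1_zero p) (mem_ball_aux z)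

lemma summable_bg0 (p : ℕ) (z : ℂ) : Summable (fun m => bg0 p m z) := by
  have hR2 : (2 : ℝ) ≤ ‖z‖ + 2 := by linarith [norm_nonneg z]
  exact Summable.of_norm (Summable.of_nonneg_of_le (fun m => norm_nonneg _)
    (fun m => norm_bg0_le p m hR2 (by linarith [norm_nonneg z]))
    (summable_bu p _ (by linarith [norm_nonneg z])))

lemma summable_bg1 (p : ℕ) (z : ℂ) : Summable (fun m => bg1 p m z) := by
  have hR2 : (2 : ℝ) ≤ ‖z‖ + 2 := by linarith [norm_nonneg z]
  exact Summable.of_norm (Summable.of_nonneg_of_le (fun m => norm_nonneg _)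
    (fun m => norm_bg1_le p m hR2 (by linarith [norm_nonneg z]))
    (summable_bu p _ (by linarith [norm_nonneg z])))

lemma summable_bg2 (p : ℕ) (z : ℂ) : Summable (fun m => bg2 p m z) := by
  have hR2 : (2 : ℝ) ≤ ‖z‖ + 2 := by linarith [norm_nonneg z]
  exact Summable.of_norm (Summable.of_nonneg_of_le (fun m => norm_nonneg _)
    (fun m => norm_bg2_le p m hR2 (by linarith [norm_nonneg z]))
    (summable_bu p _ (by linarith [norm_nonneg z])))

lemma besselJ_eq_tsum (p : ℕ) : besselJ p = fun z => ∑' m, bg0 p m z := rfl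

lemma besselJ'_eq_tsum (p : ℕ) (z : ℂ) : besselJ' p z = ∑' m, bg1 p m z := by
  rw [besselJ', besselJ_eq_tsum]
  exact (hasDerivAt_tsum_bg0 p z).deriv

lemma hasDerivAt_besselJ (p : ℕ) (z : ℂ) :
    HasDerivAt (besselJ p) (besselJ' p z) z := by
  rw [besselJ_eq_tsum, besselJ'_eq_tsum]
  exact hasDerivAt_tsum_bg0 p z

lemma hasDerivAt_besselJ' (p : ℕ) (z : ℂ) :
    HasDerivAt (besselJ' p) (∑' m, bg2 p m z) z := by
  have he : besselJ' p = fun y => ∑' m, bg1 p m y := funext fun y => besselJ'_eq_tsum p y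
  rw [he]
  exact hasDerivAt_tsum_bg1 p z


lemma bc_succ (p m : ℕ) :
    bc p (m + 1) * (((m : ℂ) + 1) * ((m : ℂ) + 1 + p)) = - bc p m := by
  unfold bc
  have h1 : Nat.factorial (m + 1) = (m + 1) * Nat.factorial m := Nat.factorial_succ m
  have h2 : m + 1 + p = (m + p) + 1 := by omega
  rw [h1, h2, Nat.factorial_succ]
  have hm : ((Nat.factorial m : ℂ)) ≠ 0 := Nat.cast_ne_zero.2 (Nat.factorial_ne_zero m)
  have hmp : ((Nat.factorial (m + p) : ℂ)) ≠ 0 := Nat.cast_ne_zero.2 (Nat.factorial_ne_zero _)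
  have hm1 : ((m : ℂ) + 1) ≠ 0 := by
    have : (((m + 1 : ℕ)) : ℂ) ≠ 0 := Nat.cast_ne_zero.2 (Nat.succ_ne_zero m)
    push_cast at this; exact this
  have hmp1 : ((m : ℂ) + (p : ℂ) + 1) ≠ 0 := by
    have : (((m + p + 1 : ℕ)) : ℂ) ≠ 0 := Nat.cast_ne_zero.2 (by omega)
    push_cast at this; exact this
  push_cast
  field_simp
  ring

lemma term_identity (p m : ℕ) (z : ℂ) :
    z ^ 2 * bg2 p m z + z * bg1 p m z - (p : ℂ) ^ 2 * bg0 p m z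
      = 4 * (m : ℂ) * ((m : ℂ) + (p : ℂ)) * bc p m * (z / 2) ^ (2 * m + p) := by
  by_cases h : 2 ≤ 2 * m + p
  · obtain ⟨j, hj⟩ : ∃ j, 2 * m + p = j + 2 := ⟨2 * m + p - 2, by omega⟩
    have hcast : (j : ℂ) + 2 = 2 * (m : ℂ) + (p : ℂ) := by
      have := congrArg (Nat.cast (R := ℂ)) hj
      push_cast at this; linear_combination -this
    unfold bg0 bg1 bg2
    rw [hj]
    have e1 : j + 2 - 1 = j + 1 := by omega
    have e2 : j + 1 - 1 = j := by omega
    rw [e1, e2]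
    push_cast
    linear_combination (bc p m * (z / 2) ^ j * (z / 2) ^ 2
      * ((j : ℂ) + 2 + 2 * (m : ℂ) + (p : ℂ))) * hcast
  · have hm : m = 0 := by omega
    subst hm
    have hp : p = 0 ∨ p = 1 := by omega
    rcases hp with hp | hp <;> subst hp <;>
      simp [bg0, bg1, bg2] <;> ring

lemma besselJ_ode_tsum (p : ℕ) (z : ℂ) :
    z ^ 2 * (∑' m, bg2 p m z) + z * (∑' m, bg1 p m z)
      + (z ^ 2 - (p : ℂ) ^ 2) * (∑' m, bg0 p m z) = 0 := by
  have s0 := summable_bg0 p z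
  have s1 := summable_bg1 p z
  have s2 := summable_bg2 p z
  set k : ℕ → ℂ := fun m => 4 * (m : ℂ) * ((m : ℂ) + (p : ℂ)) * bc p m * (z / 2) ^ (2 * m + p)
    with hkdef
  have hk : ∀ m, z ^ 2 * bg2 p m z + z * bg1 p m z - (p : ℂ) ^ 2 * bg0 p m z = k m :=
    fun m => term_identity p m z
  have hsummk : Summable k := by
    have hs : Summable (fun m => z ^ 2 * bg2 p m z + z * bg1 p m z - (p : ℂ) ^ 2 * bg0 p m z) :=
      ((s2.mul_left _).add (s1.mul_left _)).sub (s0.mul_left _)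
    exact hs.congr hk
  have hsucc : ∀ m, k (m + 1) = -(z ^ 2 * bg0 p m z) := by
    intro m
    have hb := bc_succ p m
    have he : 2 * (m + 1) + p = (2 * m + p) + 2 := by omega
    simp only [hkdef]
    rw [he, pow_add]
    unfold bg0
    push_cast
    linear_combination (4 * (z / 2) ^ (2 * m + p) * (z / 2) ^ 2) * hb
  have hshift : ∑' m, k m = -(z ^ 2 * ∑' m, bg0 p m z) := by
    rw [Summable.tsum_eq_zero_add hsummk]
    have h0 : k 0 = 0 := by simp [hkdef]
    rw [h0, zero_add]
    calc ∑' m, k (m + 1) = ∑' m, -(z ^ 2 * bg0 p m z) := tsum_congr hsucc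
      _ = -(∑' m, z ^ 2 * bg0 p m z) := by rw [tsum_neg]
      _ = -(z ^ 2 * ∑' m, bg0 p m z) := by rw [tsum_mul_left]
  have hrw : ∀ m, z ^ 2 * bg2 p m z + z * bg1 p m z + (z ^ 2 - (p : ℂ) ^ 2) * bg0 p m z
      = k m + z ^ 2 * bg0 p m z := by
    intro m; linear_combination hk m
  calc z ^ 2 * (∑' m, bg2 p m z) + z * (∑' m, bg1 p m z)
        + (z ^ 2 - (p : ℂ) ^ 2) * (∑' m, bg0 p m z)
      = (∑' m, z ^ 2 * bg2 p m z) + (∑' m, z * bg1 p m z)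
        + (∑' m, (z ^ 2 - (p : ℂ) ^ 2) * bg0 p m z) := by
        rw [tsum_mul_left, tsum_mul_left, tsum_mul_left]
    _ = ∑' m, (z ^ 2 * bg2 p m z + z * bg1 p m z + (z ^ 2 - (p : ℂ) ^ 2) * bg0 p m z) := by
        rw [Summable.tsum_add ((s2.mul_left _).add (s1.mul_left _)) (s0.mul_left _),
          Summable.tsum_add (s2.mul_left _) (s1.mul_left _)]
    _ = ∑' m, (k m + z ^ 2 * bg0 p m z) := tsum_congr hrw
    _ = (∑' m, k m) + ∑' m, z ^ 2 * bg0 p m z := Summable.tsum_add hsummk (s0.mul_left _)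
    _ = 0 := by rw [hshift, tsum_mul_left]; ring

lemma besselJ_zero_eq (p : ℕ) (hp : p ≠ 0) : besselJ p 0 = 0 := by
  have h : ∀ m : ℕ, bg0 p m 0 = 0 := by
    intro m
    have : 2 * m + p ≠ 0 := by omega
    simp [bg0, zero_div, zero_pow this]
  calc besselJ p 0 = ∑' m, bg0 p m 0 := rfl
    _ = ∑' _ : ℕ, (0 : ℂ) := tsum_congr h
    _ = 0 := tsum_zero

/-- the n-partial derivative of `F_p` at a root of `F_p`. -/
theorem stmt_4 (p : ℕ) (n : ℝ) (hn : 0 < n) (κ : ℂ) (hF : Fp p κ n = 0) :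
    deriv (fun t : ℝ => Fp p κ t) n
      = (((n : ℂ) * κ ^ 2 - (p : ℂ) ^ 2) / (2 * (n : ℂ)))
          * besselJ p κ * besselJ p ((Real.sqrt n : ℂ) * κ)
        + (κ ^ 2 / (2 * (Real.sqrt n : ℂ)))
          * besselJ' p κ * besselJ' p ((Real.sqrt n : ℂ) * κ) := by
  by_cases hκ : κ = 0
  · subst hκ
    have hF0 : (fun t : ℝ => Fp p 0 t) = fun _ => (0 : ℂ) := by
      funext t; simp [Fp]
    rw [hF0, deriv_const]
    by_cases hp : p = 0
    · subst hp; norm_num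
    · rw [mul_zero, besselJ_zero_eq p hp]
      ring
  · have hs0 : 0 < Real.sqrt n := Real.sqrt_pos.2 hn
    have hsC : ((Real.sqrt n : ℝ) : ℂ) ≠ 0 := Complex.ofReal_ne_zero.2 hs0.ne'
    have hnC : (n : ℂ) ≠ 0 := Complex.ofReal_ne_zero.2 hn.ne'
    have hs2 : ((Real.sqrt n : ℝ) : ℂ) ^ 2 = (n : ℂ) := by
      rw [← Complex.ofReal_pow]
      exact congrArg _ (Real.sq_sqrt hn.le)
    have hin : HasDerivAt (fun t : ℝ => ((Real.sqrt t : ℝ) : ℂ) * κ)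
        (((1 / (2 * Real.sqrt n) : ℝ) : ℂ) * κ) n :=
      ((Real.hasDerivAt_sqrt hn.ne').ofReal_comp).mul_const κ
    have hA : HasDerivAt (fun t : ℝ => besselJ p (((Real.sqrt t : ℝ) : ℂ) * κ))
        ((((1 / (2 * Real.sqrt n) : ℝ) : ℂ) * κ)
          * besselJ' p (((Real.sqrt n : ℝ) : ℂ) * κ)) n :=
      by have h := (hasDerivAt_besselJ p (((Real.sqrt n : ℝ) : ℂ) * κ)).scomp n hin
         rwa [smul_eq_mul] at h
    have hB : HasDerivAt (fun t : ℝ => besselJ' p (((Real.sqrt t : ℝ) : ℂ) * κ))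
        ((((1 / (2 * Real.sqrt n) : ℝ) : ℂ) * κ)
          * (∑' m, bg2 p m (((Real.sqrt n : ℝ) : ℂ) * κ))) n :=
      (hasDerivAt_besselJ' p (((Real.sqrt n : ℝ) : ℂ) * κ)).scomp n hin
    have hsq : HasDerivAt (fun t : ℝ => ((Real.sqrt t : ℝ) : ℂ))
        (((1 / (2 * Real.sqrt n) : ℝ) : ℂ)) n :=
      (Real.hasDerivAt_sqrt hn.ne').ofReal_comp
    have h1 := hA.const_mul (besselJ' p κ)
    have h2 := (hsq.mul_const (besselJ p κ)).mul hB
    have h3 := (h1.sub h2).const_mul κ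
    have hG : HasDerivAt (fun t : ℝ => Fp p κ t)
        (κ * (besselJ' p κ * ((((1 / (2 * Real.sqrt n) : ℝ) : ℂ) * κ)
            * besselJ' p (((Real.sqrt n : ℝ) : ℂ) * κ))
          - ((((1 / (2 * Real.sqrt n) : ℝ) : ℂ)) * besselJ p κ
              * besselJ' p (((Real.sqrt n : ℝ) : ℂ) * κ)
            + (((Real.sqrt n : ℝ) : ℂ)) * besselJ p κ
              * ((((1 / (2 * Real.sqrt n) : ℝ) : ℂ) * κ)
                * (∑' m, bg2 p m (((Real.sqrt n : ℝ) : ℂ) * κ)))))) n := h3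
    rw [hG.deriv]
    have hr : ((1 / (2 * Real.sqrt n) : ℝ) : ℂ) = 1 / (2 * ((Real.sqrt n : ℝ) : ℂ)) := by
      push_cast; ring
    rw [hr]
    have hode := besselJ_ode_tsum p (((Real.sqrt n : ℝ) : ℂ) * κ)
    rw [← besselJ'_eq_tsum] at hode
    have hJ : (∑' m, bg0 p m (((Real.sqrt n : ℝ) : ℂ) * κ))
        = besselJ p (((Real.sqrt n : ℝ) : ℂ) * κ) := rfl
    rw [hJ] at hode
    field_simp
    simp only [mul_comm κ ((Real.sqrt n : ℝ) : ℂ)]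
    linear_combination (-((Real.sqrt n : ℝ) : ℂ) * besselJ p κ) * hode
      + (((Real.sqrt n : ℝ) : ℂ) * κ ^ 2 * besselJ p κ * (∑' m, bg2 p m (((Real.sqrt n : ℝ) : ℂ) * κ))
        + κ * besselJ p κ * besselJ' p (((Real.sqrt n : ℝ) : ℂ) * κ)
        + ((Real.sqrt n : ℝ) : ℂ) * κ ^ 2 * besselJ p κ * besselJ p (((Real.sqrt n : ℝ) : ℂ) * κ)) * hs2
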